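/- Let p be a probability measure on ℝ with finite first and second moments, mean μ and variance Var(p), let σ² ∈ (0, 1], and let 0 ≤ L < 1 − σ². Among all affine functions f(x) = m·x + b with m ∈ [−L, L] and b ∈ ℝ, the functional F(f) = ∫ |(1 − σ²)·x − f(x)|² dp(x) is minimized by f*(x) = L·x + (1 − σ² − L)·μ; that is, for all such (m, b), ∫ |(1 − σ² − m)·x − b|² dp(x) ≥ (1 − σ² − L)²·Var(p). Moreover, if Var(p) > 0, then (m, b) = (L, (1 − σ² − L)·μ) is the unique minimizing pair. -/

import Mathlib

open MeasureTheory

/-- **Approximation training over affine functions (Lemma 3.2).** Let `p` be a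
probability measure on `ℝ` with finite first and second moments, mean `μ` and
variance `V`, let `σ² = s ∈ (0,1]` and `0 ≤ L < 1 - s`. Among affine functions
`f(x) = m x + b` with `|m| ≤ L`, the approximation loss
`∫ |(1 - s)x - (m x + b)|² dp` is minimized by `m = L`, `b = (1 - s - L)μ`, with
optimal value `(1 - s - L)² V`; and if `V > 0` this minimizer is unique. -/
theorem approx_training_affine_minimizer
    (p : Measure ℝ) [IsProbabilityMeasure p]
    (h1 : Integrable (fun x => x) p) (h2 : Integrable (fun x => x ^ 2) p)
    (s L : ℝ) (hs0 : 0 < s) (hs1 : s ≤ 1) (hL0 : 0 ≤ L) (hL : L < 1 - s) :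
    (∀ m b : ℝ, |m| ≤ L →
        (1 - s - L) ^ 2 * (∫ x, (x - ∫ y, y ∂p) ^ 2 ∂p) ≤
          ∫ x, ((1 - s - m) * x - b) ^ 2 ∂p) ∧
      (0 < ∫ x, (x - ∫ y, y ∂p) ^ 2 ∂p →
        ∀ m b : ℝ, |m| ≤ L →
          (∫ x, ((1 - s - m) * x - b) ^ 2 ∂p) =
            (1 - s - L) ^ 2 * (∫ x, (x - ∫ y, y ∂p) ^ 2 ∂p) →
          m = L ∧ b = (1 - s - L) * ∫ y, y ∂p) := by
  set μ : ℝ := ∫ y, y ∂p with hμ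
  set V : ℝ := ∫ x, (x - μ) ^ 2 ∂p with hV
  have hμsq : Integrable (fun x => (x - μ) ^ 2) p := by
    have : (fun x : ℝ => (x - μ) ^ 2) = fun x => x ^ 2 - (2 * μ) * x + μ ^ 2 := by
      funext x; ring
    rw [this]
    exact (h2.sub (h1.const_mul (2 * μ))).add (integrable_const _)
  have hsub : Integrable (fun x => x - μ) p := h1.sub (integrable_const μ)
  have hzero : ∫ x, (x - μ) ∂p = 0 := by
    rw [integral_sub h1 (integrable_const μ), integral_const, probReal_univ]
    simp [hμ]
  have key : ∀ c b : ℝ, ∫ x, (c * x - b) ^ 2 ∂p = c ^ 2 * V + (c * μ - b) ^ 2 := by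
    intro c b
    have heq : (fun x : ℝ => (c * x - b) ^ 2)
        = fun x => c ^ 2 * (x - μ) ^ 2 + (2 * c * (c * μ - b)) * (x - μ) + (c * μ - b) ^ 2 := by
      funext x; ring
    rw [heq]
    have hA : Integrable (fun x => c ^ 2 * (x - μ) ^ 2) p := hμsq.const_mul _
    have hB : Integrable (fun x => 2 * c * (c * μ - b) * (x - μ)) p := hsub.const_mul _
    have hAB : Integrable (fun x => c ^ 2 * (x - μ) ^ 2
        + 2 * c * (c * μ - b) * (x - μ)) p := hA.add hB
    rw [integral_add hAB (integrable_const _), integral_add hA hB,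
      integral_const_mul, integral_const_mul, hzero, integral_const, probReal_univ]
    simp [hV]
  have hVnn : 0 ≤ V := integral_nonneg fun x => sq_nonneg _
  have hdpos : 0 < 1 - s - L := by linarith
  constructor
  · intro m b hm
    rw [key]
    have hc : 1 - s - L ≤ 1 - s - m := by
      have := abs_le.mp hm; linarith [this.2]
    nlinarith [sq_nonneg ((1 - s - m) * μ - b),
      mul_nonneg (mul_nonneg (sub_nonneg.mpr hc)
        (show (0:ℝ) ≤ (1 - s - m) + (1 - s - L) by linarith)) hVnn]
  · intro hVpos m b hm heq
    rw [key] at heq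
    have hc : 1 - s - L ≤ 1 - s - m := by
      have := abs_le.mp hm; linarith [this.2]
    have hm' : m = L := by
      by_contra h
      have hlt : m < L := lt_of_le_of_ne (by linarith [abs_le.mp hm]) h
      have hpos : 0 < ((1 - s - m) - (1 - s - L)) * (((1 - s - m) + (1 - s - L)) * V) :=
        mul_pos (by linarith) (mul_pos (by linarith) hVpos)
      nlinarith [sq_nonneg ((1 - s - m) * μ - b)]
    subst hm'
    refine ⟨rfl, ?_⟩
    nlinarith [sq_nonneg ((1 - s - m) * μ - b)]
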